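/- Let (V,g) be an n-dimensional real inner product space and let T(V) be the space of trilinear forms S on V with S_{XYZ} = −S_{XZY}. Then T(V) decomposes as the direct sum of: T₁(V) = {S : S_{XYZ} = g(X,Y)θ(Z) − g(X,Z)θ(Y), θ ∈ V*}, T₂(V) = {S : the cyclic sum over X,Y,Z of S_{XYZ} vanishes and the trace c₁₂(S) = 0}, and T₃(V) = {S : S_{XYZ} = −S_{YXZ}}, and these three subspaces intersect pairwise only in 0 (for n ≥ 3). -/

import Mathlib

open RealInnerProductSpace

section Aux

variable {V : Type*} [NormedAddCommGroup V] [InnerProductSpace ℝ V] [FiniteDimensional ℝ V]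

/-- The `T₁` form built from a linear functional `θ`. -/
noncomputable def T1form (θ : V →ₗ[ℝ] ℝ) : V →ₗ[ℝ] V →ₗ[ℝ] V →ₗ[ℝ] ℝ :=
  LinearMap.mk₂ ℝ (fun X Y => ⟪X, Y⟫ • θ - θ Y • innerₗ V X)
    (fun X X' Y => by ext Z; simp [inner_add_left]; ring)
    (fun c X Y => by ext Z; simp [inner_smul_left]; ring)
    (fun X Y Y' => by ext Z; simp [inner_add_right]; ring)
    (fun c X Y => by ext Z; simp [inner_smul_right]; ring)

@[simp] lemma T1form_apply (θ : V →ₗ[ℝ] ℝ) (X Y Z : V) :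
    T1form θ X Y Z = ⟪X, Y⟫ * θ Z - ⟪X, Z⟫ * θ Y := by
  simp [T1form, mul_comm]

/-- The cyclic sum of a trilinear form. -/
noncomputable def cyc (S : V →ₗ[ℝ] V →ₗ[ℝ] V →ₗ[ℝ] ℝ) : V →ₗ[ℝ] V →ₗ[ℝ] V →ₗ[ℝ] ℝ :=
  LinearMap.mk₂ ℝ (fun X Y => S X Y + (S Y).flip X + (S.flip X).flip Y)
    (fun X X' Y => by ext Z; simp [LinearMap.flip_apply] <;> ring)
    (fun c X Y => by ext Z; simp [LinearMap.flip_apply] <;> ring)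
    (fun X Y Y' => by ext Z; simp [LinearMap.flip_apply] <;> ring)
    (fun c X Y => by ext Z; simp [LinearMap.flip_apply] <;> ring)

@[simp] lemma cyc_apply (S : V →ₗ[ℝ] V →ₗ[ℝ] V →ₗ[ℝ] ℝ) (X Y Z : V) :
    cyc S X Y Z = S X Y Z + S Y Z X + S Z X Y := by
  simp [cyc, LinearMap.flip_apply]

noncomputable instance triAddCommGroup : AddCommGroup (V →ₗ[ℝ] V →ₗ[ℝ] V →ₗ[ℝ] ℝ) := by
  exact @LinearMap.addCommGroup ℝ ℝ V (V →ₗ[ℝ] V →ₗ[ℝ] ℝ) _ _ _ _ _ _ (RingHom.id ℝ)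

lemma tri_sub_apply (S T : V →ₗ[ℝ] V →ₗ[ℝ] V →ₗ[ℝ] ℝ) (X : V) : (S - T) X = S X - T X := rfl

/-- The trace `c₁₂` is independent of the orthonormal basis. -/
lemma trace_indep {n : ℕ} (S : V →ₗ[ℝ] V →ₗ[ℝ] V →ₗ[ℝ] ℝ)
    (b c : OrthonormalBasis (Fin n) ℝ V) (Z : V) :
    ∑ i, S (b i) (b i) Z = ∑ i, S (c i) (c i) Z := by
  have key : ∀ i, S (b i) (b i) Z = ∑ j, ⟪c j, b i⟫ * S (b i) (c j) Z := by
    intro i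
    nth_rewrite 2 [← c.sum_repr' (b i)]
    simp [map_sum, LinearMap.sum_apply, map_smul, smul_eq_mul]
  have key2 : ∀ j, ∑ i, ⟪c j, b i⟫ * S (b i) (c j) Z = S (c j) (c j) Z := by
    intro j
    have h := b.sum_repr' (c j)
    calc ∑ i, ⟪c j, b i⟫ * S (b i) (c j) Z
        = S (∑ i, ⟪b i, c j⟫ • b i) (c j) Z := by
          simp [map_sum, LinearMap.sum_apply, map_smul, smul_eq_mul, real_inner_comm]
      _ = S (c j) (c j) Z := by rw [h]
  calc ∑ i, S (b i) (b i) Z = ∑ i, ∑ j, ⟪c j, b i⟫ * S (b i) (c j) Z :=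
        Finset.sum_congr rfl fun i _ => key i
    _ = ∑ j, ∑ i, ⟪c j, b i⟫ * S (b i) (c j) Z := Finset.sum_comm
    _ = ∑ j, S (c j) (c j) Z := Finset.sum_congr rfl fun j _ => key2 j

end Aux

set_option maxHeartbeats 2000000 in
theorem decomposition_of_homogeneous_structures
    {V : Type*} [NormedAddCommGroup V] [InnerProductSpace ℝ V] [FiniteDimensional ℝ V]
    (n : ℕ) (hn : 3 ≤ n) (hdim : Module.finrank ℝ V = n) :
    -- existence of the decomposition
    ((∀ S : V →ₗ[ℝ] V →ₗ[ℝ] V →ₗ[ℝ] ℝ, (∀ X Y Z : V, S X Y Z = - S X Z Y) →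
      ∃ S₁ S₂ S₃ : V →ₗ[ℝ] V →ₗ[ℝ] V →ₗ[ℝ] ℝ,
        (∀ X Y Z : V, S₁ X Y Z = - S₁ X Z Y) ∧
        (∀ X Y Z : V, S₂ X Y Z = - S₂ X Z Y) ∧
        (∀ X Y Z : V, S₃ X Y Z = - S₃ X Z Y) ∧
        (∃ θ : V →ₗ[ℝ] ℝ, ∀ X Y Z : V,
          S₁ X Y Z = ⟪X, Y⟫ * θ Z - ⟪X, Z⟫ * θ Y) ∧
        ((∀ X Y Z : V, S₂ X Y Z + S₂ Y Z X + S₂ Z X Y = 0) ∧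
          (∀ (b : OrthonormalBasis (Fin n) ℝ V) (Z : V), ∑ i, S₂ (b i) (b i) Z = 0)) ∧
        (∀ X Y Z : V, S₃ X Y Z = - S₃ Y X Z) ∧
        S = S₁ + S₂ + S₃)) ∧
    -- `T₁ ∩ T₂ = 0`
    (∀ S : V →ₗ[ℝ] V →ₗ[ℝ] V →ₗ[ℝ] ℝ, (∀ X Y Z : V, S X Y Z = - S X Z Y) →
      (∃ θ : V →ₗ[ℝ] ℝ, ∀ X Y Z : V, S X Y Z = ⟪X, Y⟫ * θ Z - ⟪X, Z⟫ * θ Y) →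
      ((∀ X Y Z : V, S X Y Z + S Y Z X + S Z X Y = 0) ∧
        (∀ (b : OrthonormalBasis (Fin n) ℝ V) (Z : V), ∑ i, S (b i) (b i) Z = 0)) →
      S = 0) ∧
    -- `T₁ ∩ T₃ = 0`
    (∀ S : V →ₗ[ℝ] V →ₗ[ℝ] V →ₗ[ℝ] ℝ, (∀ X Y Z : V, S X Y Z = - S X Z Y) →
      (∃ θ : V →ₗ[ℝ] ℝ, ∀ X Y Z : V, S X Y Z = ⟪X, Y⟫ * θ Z - ⟪X, Z⟫ * θ Y) →
      (∀ X Y Z : V, S X Y Z = - S Y X Z) →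
      S = 0) ∧
    -- `T₂ ∩ T₃ = 0`
    (∀ S : V →ₗ[ℝ] V →ₗ[ℝ] V →ₗ[ℝ] ℝ, (∀ X Y Z : V, S X Y Z = - S X Z Y) →
      ((∀ X Y Z : V, S X Y Z + S Y Z X + S Z X Y = 0) ∧
        (∀ (b : OrthonormalBasis (Fin n) ℝ V) (Z : V), ∑ i, S (b i) (b i) Z = 0)) →
      (∀ X Y Z : V, S X Y Z = - S Y X Z) →
      S = 0) := by
  have hne : ((n : ℝ) - 1) ≠ 0 := by
    have : (3 : ℝ) ≤ n := by exact_mod_cast hn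
    linarith
  -- a fixed orthonormal basis
  have b₀ : OrthonormalBasis (Fin n) ℝ V := (stdOrthonormalBasis ℝ V).reindex (finCongr hdim)
  have hbb : ∀ (b : OrthonormalBasis (Fin n) ℝ V) (i : Fin n), ⟪b i, b i⟫ = (1 : ℝ) := by
    intro b i
    simpa using orthonormal_iff_ite.mp b.orthonormal i i
  refine ⟨?_, ?_, ?_, ?_⟩
  · -- existence
    intro S hS
    have hzero : ∀ X Y : V, S X Y Y = 0 := fun X Y => by have := hS X Y Y; linarith
    set θ : V →ₗ[ℝ] ℝ := ((n : ℝ) - 1)⁻¹ • (∑ i, S (b₀ i) (b₀ i)) with hθdef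
    have hθval : ∀ Z : V, ((n : ℝ) - 1) * θ Z = ∑ i, S (b₀ i) (b₀ i) Z := by
      intro Z
      simp only [hθdef, LinearMap.smul_apply, LinearMap.sum_apply, smul_eq_mul]
      field_simp
    refine ⟨T1form θ, S - T1form θ - (3 : ℝ)⁻¹ • cyc S, (3 : ℝ)⁻¹ • cyc S, ?_, ?_, ?_, ?_, ⟨?_, ?_⟩, ?_, ?_⟩
    · intro X Y Z; simp only [T1form_apply]; ring
    · intro X Y Z
      simp only [tri_sub_apply, LinearMap.sub_apply, LinearMap.smul_apply, cyc_apply, T1form_apply,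
        smul_eq_mul]
      linarith [hS X Y Z, hS Z X Y, hS Y Z X]
    · intro X Y Z
      have h2 := hS X Z Y
      have h4 := hS Y X Z
      have h5 := hS Z Y X
      simp
      linarith
    · exact ⟨θ, fun X Y Z => by simp⟩
    · intro X Y Z
      simp only [tri_sub_apply, LinearMap.sub_apply, LinearMap.smul_apply, cyc_apply, T1form_apply,
        smul_eq_mul]
      rw [real_inner_comm Y X, real_inner_comm Z X, real_inner_comm Z Y]
      ring
    · intro b Z
      have h0 : ∑ i, S (b i) (b i) Z = ((n : ℝ) - 1) * θ Z := by
        rw [trace_indep S b b₀, ← hθval]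
      have h1 : ∑ i, T1form θ (b i) (b i) Z = ((n : ℝ)) * θ Z - θ Z := by
        have ha : ∑ i, ⟪b i, b i⟫ * θ Z = (n : ℝ) * θ Z := by
          rw [Finset.sum_congr rfl fun i _ => by rw [hbb b i, one_mul]]
          simp [Finset.sum_const, nsmul_eq_mul]
        have hb : ∑ i, ⟪b i, Z⟫ * θ (b i) = θ Z := by
          calc ∑ i, ⟪b i, Z⟫ * θ (b i) = θ (∑ i, ⟪b i, Z⟫ • b i) := by
                simp [map_sum, map_smul, smul_eq_mul]
            _ = θ Z := by rw [b.sum_repr']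
        simp only [T1form_apply]
        rw [Finset.sum_sub_distrib, ha, hb]
      have h3 : ∑ i, ((3 : ℝ)⁻¹ • cyc S) (b i) (b i) Z = 0 := by
        refine Finset.sum_eq_zero fun i _ => ?_
        have := hS (b i) Z (b i)
        have := hzero Z (b i)
        simp only [LinearMap.smul_apply, cyc_apply, smul_eq_mul]
        linarith
      have hsub : ∀ i : Fin n,
          (S - T1form θ - (3 : ℝ)⁻¹ • cyc S) (b i) (b i) Z
            = S (b i) (b i) Z - T1form θ (b i) (b i) Z
              - ((3 : ℝ)⁻¹ • cyc S) (b i) (b i) Z := fun i => by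
        simp only [tri_sub_apply, LinearMap.sub_apply]
      rw [Finset.sum_congr rfl fun i _ => hsub i, Finset.sum_sub_distrib,
        Finset.sum_sub_distrib, h1, h3, h0]
      ring
    · intro X Y Z
      have h2 := hS X Z Y
      have h4 := hS Y X Z
      have h5 := hS Z Y X
      simp
      linarith
    · abel
  · -- T₁ ∩ T₂ = 0
    rintro S hS ⟨θ, hθ⟩ ⟨-, htr⟩
    have hθ0 : ∀ Z : V, θ Z = 0 := by
      intro Z
      have h := htr b₀ Z
      have ha : ∑ i, ⟪b₀ i, b₀ i⟫ * θ Z = (n : ℝ) * θ Z := by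
        rw [Finset.sum_congr rfl fun i _ => by rw [hbb b₀ i, one_mul]]
        simp [Finset.sum_const, nsmul_eq_mul]
      have hb : ∑ i, ⟪b₀ i, Z⟫ * θ (b₀ i) = θ Z := by
        calc ∑ i, ⟪b₀ i, Z⟫ * θ (b₀ i) = θ (∑ i, ⟪b₀ i, Z⟫ • b₀ i) := by
              simp [map_sum, map_smul, smul_eq_mul]
          _ = θ Z := by rw [b₀.sum_repr']
      rw [Finset.sum_congr rfl fun i _ => hθ (b₀ i) (b₀ i) Z, Finset.sum_sub_distrib,
        ha, hb] at h
      have : ((n : ℝ) - 1) * θ Z = 0 := by linarith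
      exact (mul_eq_zero.mp this).resolve_left hne
    ext X Y Z
    simp [hθ, hθ0]
  · -- T₁ ∩ T₃ = 0
    rintro S hS ⟨θ, hθ⟩ h3
    have key : ∀ e Z : V, ⟪e, e⟫ = (1 : ℝ) → θ Z = ⟪e, Z⟫ * θ e := by
      intro e Z he
      have h := h3 e e Z
      have h0 : S e e Z = 0 := by linarith
      have := hθ e e Z
      rw [h0, he] at this
      linarith
    have i0 : Fin n := ⟨0, by omega⟩
    have i1 : Fin n := ⟨1, by omega⟩
    have horth : ⟪b₀ ⟨0, by omega⟩, b₀ ⟨1, by omega⟩⟫ = (0 : ℝ) := by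
      simpa using orthonormal_iff_ite.mp b₀.orthonormal ⟨0, by omega⟩ ⟨1, by omega⟩
    have hθ1 : θ (b₀ ⟨1, by omega⟩) = 0 := by
      rw [key (b₀ ⟨0, by omega⟩) _ (hbb b₀ _), horth, zero_mul]
    have hθ0' : θ (b₀ ⟨0, by omega⟩) = 0 := by
      rw [key (b₀ ⟨1, by omega⟩) _ (hbb b₀ _), real_inner_comm, horth, zero_mul]
    have hθz : ∀ Z : V, θ Z = 0 := by
      intro Z
      rw [key (b₀ ⟨0, by omega⟩) Z (hbb b₀ _), hθ0', mul_zero]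
    ext X Y Z
    simp [hθ, hθz]
  · -- T₂ ∩ T₃ = 0
    rintro S h1 ⟨hcyc, -⟩ h3
    ext X Y Z
    simp only [LinearMap.zero_apply]
    have e1 := h1 Y Z X
    have e2 := h3 Y X Z
    have e3 := h1 Z X Y
    have e4 := h3 Z Y X
    have e5 := hcyc X Y Z
    linarith
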